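/- Let S be a nonempty closed convex subset of ℝ^{d1×d2} (with the Frobenius inner product), let f be convex and differentiable with ‖∇f(X) − ∇f(Y)‖_F ≤ L‖X−Y‖_F for all X, Y, and let 0 < t ≤ 1/L. For M ∈ S define G_t(M) = (1/t)(M − Π_S(M − t∇f(M))). Then for every Z ∈ S, f(M − t·G_t(M)) ≤ f(Z) + ⟨G_t(M), M − Z⟩ − (t/2)‖G_t(M)‖_F². -/

import Mathlib

open Real
open scoped RealInnerProductSpace

open scoped Topology

variable {E : Type*} [NormedAddCommGroup E] [InnerProductSpace ℝ E] [CompleteSpace E]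

lemma aux_line_deriv {f : E → ℝ} {f' : E → E} (hgrad : ∀ x, HasGradientAt f (f' x) x)
    (x v : E) (s : ℝ) :
    HasDerivAt (fun s : ℝ => f (x + s • v)) ⟪f' (x + s • v), v⟫ s := by
  have hψ : HasDerivAt (fun s : ℝ => x + s • v) v s := by
    simpa using ((hasDerivAt_id s).smul_const v).const_add x
  have hF : HasFDerivAt f (InnerProductSpace.toDual ℝ E (f' (x + s • v))) (x + s • v) :=
    (hasGradientAt_iff_hasFDerivAt.mp (hgrad _))
  exact hF.comp_hasDerivAt s hψ

/-- gradient inequality for convex functions -/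
lemma aux_convex_grad (f : E → ℝ) (g : E) (x y : E)
    (hf : ConvexOn ℝ Set.univ f) (hx : HasGradientAt f g x) :
    f x + ⟪g, y - x⟫ ≤ f y := by
  set v := y - x with hv
  have hd : HasDerivAt (fun s : ℝ => f (x + s • v)) ⟪g, v⟫ 0 := by
    have hψ : HasDerivAt (fun s : ℝ => x + s • v) v 0 := by
      simpa using ((hasDerivAt_id (0:ℝ)).smul_const v).const_add x
    have hF : HasFDerivAt f (InnerProductSpace.toDual ℝ E g) x :=
      hasGradientAt_iff_hasFDerivAt.mp hx
    have : HasFDerivAt f (InnerProductSpace.toDual ℝ E g) (x + (0:ℝ) • v) := by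
      simpa using hF
    exact this.comp_hasDerivAt 0 hψ
  have hslope : Filter.Tendsto (slope (fun s : ℝ => f (x + s • v)) 0) (𝓝[>] 0)
      (𝓝 ⟪g, v⟫) :=
    (hasDerivAt_iff_tendsto_slope.mp hd).mono_left
      (nhdsWithin_mono _ fun s hs => ne_of_gt hs)
  have hineq : ∀ᶠ s in 𝓝[>] (0:ℝ), slope (fun s : ℝ => f (x + s • v)) 0 s ≤ f y - f x := by
    filter_upwards [Ioc_mem_nhdsGT one_pos] with s hs
    have h01 : (0:ℝ) ≤ 1 - s := by linarith [hs.2]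
    have hc := hf.2 (Set.mem_univ x) (Set.mem_univ y) h01 (le_of_lt hs.1) (by ring)
    have hxy : (1 - s) • x + s • y = x + s • v := by
      simp only [hv]; module
    rw [hxy] at hc
    simp only [slope_def_field, zero_smul, add_zero, sub_zero]
    rw [div_le_iff₀ hs.1]
    simp only [smul_eq_mul] at hc
    nlinarith [hs.1]
  have := le_of_tendsto hslope hineq
  linarith

/-- descent lemma -/
lemma aux_descent (f : E → ℝ) (f' : E → E) (L : ℝ) (hL : 0 < L)
    (hgrad : ∀ x, HasGradientAt f (f' x) x)
    (hlip : ∀ x y, ‖f' x - f' y‖ ≤ L * ‖x - y‖) (x y : E) :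
    f y ≤ f x + ⟪f' x, y - x⟫ + L / 2 * ‖y - x‖ ^ 2 := by
  set v := y - x with hv
  set φ' : ℝ → ℝ := fun s => ⟪f' (x + s • v), v⟫ with hφ'
  have hderiv : ∀ s : ℝ, HasDerivAt (fun s : ℝ => f (x + s • v)) (φ' s) s :=
    fun s => aux_line_deriv hgrad x v s
  have hcontf' : Continuous f' := by
    have : LipschitzWith L.toNNReal f' := by
      apply LipschitzWith.of_dist_le_mul
      intro a b
      rw [dist_eq_norm, dist_eq_norm]
      simpa [Real.coe_toNNReal L hL.le] using hlip a b
    exact this.continuous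
  have hcontφ' : Continuous φ' := by
    apply Continuous.inner
    · exact hcontf'.comp (by continuity)
    · exact continuous_const
  have hint : ∫ s in (0:ℝ)..1, φ' s = f y - f x := by
    have := intervalIntegral.integral_eq_sub_of_hasDerivAt
      (f := fun s : ℝ => f (x + s • v)) (f' := φ')
      (fun s _ => hderiv s) (hcontφ'.intervalIntegrable 0 1)
    simpa [hv] using this
  have hbound : ∀ s ∈ Set.Icc (0:ℝ) 1, φ' s ≤ ⟪f' x, v⟫ + L * s * ‖v‖ ^ 2 := by
    intro s hs
    have h1 : φ' s - ⟪f' x, v⟫ = ⟪f' (x + s • v) - f' x, v⟫ := by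
      rw [inner_sub_left]
    have h2 : ⟪f' (x + s • v) - f' x, v⟫ ≤ ‖f' (x + s • v) - f' x‖ * ‖v‖ :=
      real_inner_le_norm _ _
    have h3 : ‖f' (x + s • v) - f' x‖ ≤ L * (s * ‖v‖) := by
      have := hlip (x + s • v) x
      simpa [norm_smul, abs_of_nonneg hs.1] using this
    nlinarith [norm_nonneg v, mul_le_mul_of_nonneg_right h3 (norm_nonneg v)]
  have hintle : ∫ s in (0:ℝ)..1, φ' s ≤ ∫ s in (0:ℝ)..1, (⟪f' x, v⟫ + L * s * ‖v‖ ^ 2) := by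
    apply intervalIntegral.integral_mono_on zero_le_one
      (hcontφ'.intervalIntegrable 0 1)
      ((by continuity : Continuous fun s : ℝ => ⟪f' x, v⟫ + L * s * ‖v‖ ^ 2).intervalIntegrable 0 1)
      hbound
  have hrhs : ∫ s in (0:ℝ)..1, (⟪f' x, v⟫ + L * s * ‖v‖ ^ 2) = ⟪f' x, v⟫ + L / 2 * ‖v‖ ^ 2 := by
    rw [intervalIntegral.integral_add (intervalIntegrable_const) (by exact (by continuity : Continuous fun s : ℝ => L * s * ‖v‖ ^ 2).intervalIntegrable 0 1)]
    simp only [intervalIntegral.integral_const, smul_eq_mul]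
    have : ∫ s in (0:ℝ)..1, L * s * ‖v‖ ^ 2 = L / 2 * ‖v‖ ^ 2 := by
      have : (fun s : ℝ => L * s * ‖v‖ ^ 2) = fun s : ℝ => (L * ‖v‖ ^ 2) * s := by
        ext s; ring
      rw [this, intervalIntegral.integral_const_mul, integral_id]
      ring
    rw [this]; ring
  rw [hint] at hintle
  rw [hrhs] at hintle
  linarith

/-- projection variational inequality -/
lemma aux_proj_var {S : Set E} (hconv : Convex ℝ S)
    (proj : E → E) (hproj : ∀ y, proj y ∈ S ∧ ∀ x ∈ S, ‖proj y - y‖ ≤ ‖x - y‖)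
    (y : E) : ∀ w ∈ S, ⟪y - proj y, w - proj y⟫ ≤ 0 := by
  have hmem := (hproj y).1
  haveI : Nonempty S := ⟨⟨proj y, hmem⟩⟩
  rw [← norm_eq_iInf_iff_real_inner_le_zero hconv hmem]
  apply le_antisymm
  · apply le_ciInf
    intro w
    rw [norm_sub_rev y, norm_sub_rev y]
    exact (hproj y).2 w w.2
  · have hb : BddBelow (Set.range fun w : S => ‖y - (w : E)‖) :=
      ⟨0, by rintro b ⟨w, rfl⟩; exact norm_nonneg _⟩
    exact ciInf_le hb ⟨proj y, hmem⟩

/-- Key inequality for the projected gradient mapping: for `0 < t ≤ 1/L`,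
`G_t(M) = (1/t)(M − Π_S(M − t∇f(M)))`, and any `Z ∈ S`,
`f(M − t G_t(M)) ≤ f(Z) + ⟨G_t(M), M − Z⟩ − (t/2)‖G_t(M)‖²`. -/
theorem gradient_mapping_inequality (d1 d2 : ℕ)
    (S : Set (EuclideanSpace ℝ (Fin d1 × Fin d2)))
    (hne : S.Nonempty) (hcl : IsClosed S) (hconv : Convex ℝ S)
    (f : EuclideanSpace ℝ (Fin d1 × Fin d2) → ℝ)
    (f' : EuclideanSpace ℝ (Fin d1 × Fin d2) → EuclideanSpace ℝ (Fin d1 × Fin d2))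
    (hf : ConvexOn ℝ Set.univ f)
    (hgrad : ∀ x, HasGradientAt f (f' x) x)
    (L : ℝ) (hL : 0 < L)
    (hlip : ∀ x y, ‖f' x - f' y‖ ≤ L * ‖x - y‖)
    (proj : EuclideanSpace ℝ (Fin d1 × Fin d2) → EuclideanSpace ℝ (Fin d1 × Fin d2))
    (hproj : ∀ y, proj y ∈ S ∧ ∀ x ∈ S, ‖proj y - y‖ ≤ ‖x - y‖)
    (t : ℝ) (ht0 : 0 < t) (ht1 : t ≤ 1 / L)
    (M : EuclideanSpace ℝ (Fin d1 × Fin d2)) (hM : M ∈ S) :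
    ∀ Z ∈ S,
      f (M - t • ((1 / t) • (M - proj (M - t • f' M)))) ≤
        f Z + ⟪(1 / t) • (M - proj (M - t • f' M)), M - Z⟫
          - t / 2 * ‖(1 / t) • (M - proj (M - t • f' M))‖ ^ 2 := by
  intro Z hZ
  set P := proj (M - t • f' M) with hPdef
  set G := (1 / t) • (M - P) with hGdef
  have htG : t • G = M - P := by
    rw [hGdef, smul_smul]
    rw [show t * (1 / t) = 1 by field_simp]
    rw [one_smul]
  have hMt : M - t • G = P := by rw [htG]; abel
  have hpv0 := aux_proj_var hconv proj hproj (M - t • f' M) Z hZ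
  rw [← hPdef] at hpv0
  rw [hMt]
  clear_value G P
  clear hGdef hPdef
  have hLt : L * t ≤ 1 := by
    rw [le_div_iff₀ hL] at ht1; linarith
  have hn : (0:ℝ) ≤ ‖G‖ ^ 2 := by positivity
  -- descent lemma
  have hdesc := aux_descent f f' L hL hgrad hlip M P
  have hPM : P - M = -(t • G) := by rw [htG]; abel
  have h1 : ⟪f' M, P - M⟫ = -(t * ⟪f' M, G⟫) := by
    rw [hPM, inner_neg_right, real_inner_smul_right]
  have h2 : ‖P - M‖ ^ 2 = t ^ 2 * ‖G‖ ^ 2 := by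
    rw [hPM, norm_neg, norm_smul, Real.norm_eq_abs, abs_of_pos ht0, mul_pow]
  rw [h1, h2] at hdesc
  -- convexity
  have hcvx := aux_convex_grad f (f' M) M Z hf (hgrad M)
  -- projection variational inequality
  have hexp1 : M - t • f' M - P = t • G - t • f' M := by rw [htG]; abel
  have hexp2 : Z - P = (Z - M) + t • G := by rw [htG]; abel
  rw [hexp1, hexp2] at hpv0
  simp only [inner_sub_left, inner_add_right, real_inner_smul_left,
    real_inner_smul_right, real_inner_self_eq_norm_sq] at hpv0
  have hpv : ⟪G, Z - M⟫ + t * ‖G‖ ^ 2 - ⟪f' M, Z - M⟫ - t * ⟪f' M, G⟫ ≤ 0 := by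
    by_contra hcon
    push_neg at hcon
    have hts : ‖t • G‖ ^ 2 = t ^ 2 * ‖G‖ ^ 2 := by
      rw [norm_smul, Real.norm_eq_abs, abs_of_pos ht0, mul_pow]
    nlinarith [hpv0, mul_pos ht0 hcon, hts]
  -- goal inner product
  have hgoal : ⟪G, M - Z⟫ = -⟪G, Z - M⟫ := by
    rw [show M - Z = -(Z - M) by abel, inner_neg_right]
  rw [hgoal]
  nlinarith [hpv, hdesc, hcvx, hn, ht0, hLt,
    mul_le_mul_of_nonneg_right hLt (mul_nonneg ht0.le hn)]
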